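/- In the iterative shortest-cycle-deletion process on the alignment graph H (with parameter 0 < α ≤ 1/10), every deleted minimum-length cycle contains at most two good vertices. Consequently, if Ḡ is the set of bad symbols, the total number of good vertices deleted over all iterations is at most (4α/(1−4α))·|Ḡ|. -/

import Mathlib

open List

/-- A directed cycle of a relation `E`: a nonempty list of distinct vertices chained by
`E`, with an `E`-edge from the last vertex back to the first. -/
def IsCycle {n : ℕ} (E : Fin n → Fin n → Prop) (C : List (Fin n)) : Prop :=
  C ≠ [] ∧ C.Nodup ∧ C.Chain' E ∧ ∀ h : C ≠ [], E (C.getLast h) (C.head h)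

/-- The alignment-graph edge relation: `(i,j)` is an edge iff `i` precedes `j` in at
least `(1−2α)m` of the `m` permutations. -/
def edgeRel (n m : ℕ) (α : ℝ) (x : Fin m → List (Fin n)) (i j : Fin n) : Prop :=
  (1 - 2 * α) * m ≤
    ((Finset.univ.filter (fun k => (x k).idxOf i < (x k).idxOf j)).card : ℝ)

/-! ### Auxiliary lemmas -/

lemma pair_sublist_of_indexOf_lt {α : Type*} [DecidableEq α] :
    ∀ (l : List α), ∀ a b : α, a ∈ l → b ∈ l →
      l.idxOf a < l.idxOf b → [a, b] <+ l := by
  intro l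
  induction l with
  | nil => simp
  | cons c l ih =>
    intro a b ha hb hab
    by_cases hca : a = c
    · subst hca
      have hbc : b ≠ a := by rintro rfl; exact lt_irrefl _ hab
      have hb' : b ∈ l := (List.mem_cons.1 hb).resolve_left hbc
      exact (List.singleton_sublist.2 hb').cons₂ a
    · have hbc : b ≠ c := by
        rintro rfl
        rw [List.idxOf_cons_self] at hab
        omega
      rw [List.idxOf_cons_ne _ (Ne.symm hca), List.idxOf_cons_ne _ (Ne.symm hbc)] at hab
      have ha' : a ∈ l := (List.mem_cons.1 ha).resolve_left hca
      have hb' : b ∈ l := (List.mem_cons.1 hb).resolve_left hbc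
      exact (ih a b ha' hb' (by omega)).cons c

lemma indexOf_lt_of_pair_sublist {α : Type*} [DecidableEq α] :
    ∀ (l : List α), l.Nodup → ∀ a b : α, [a, b] <+ l →
      l.idxOf a < l.idxOf b := by
  intro l
  induction l with
  | nil => intro _ a b h; simp at h
  | cons c l ih =>
    intro hnd a b h
    cases h with
    | cons _ h =>
      have ha : a ∈ l := h.subset (by simp)
      have hb : b ∈ l := h.subset (by simp)
      have hca : c ≠ a := by rintro rfl; exact (List.nodup_cons.1 hnd).1 ha
      have hcb : c ≠ b := by rintro rfl; exact (List.nodup_cons.1 hnd).1 hb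
      rw [List.idxOf_cons_ne _ hca, List.idxOf_cons_ne _ hcb]
      exact Nat.succ_lt_succ (ih hnd.of_cons a b h)
    | cons_cons _ h =>
      have hb : b ∈ l := by simpa using h
      have hcb : c ≠ b := by rintro rfl; exact (List.nodup_cons.1 hnd).1 hb
      rw [List.idxOf_cons_self, List.idxOf_cons_ne _ hcb]
      exact Nat.succ_pos _

lemma chain'_head_le_getLast {β : Type*} (f : β → ℕ) :
    ∀ (l : List β), l.Chain' (fun i j => f i < f j) → ∀ h : l ≠ [],
      f (l.head h) ≤ f (l.getLast h) := by
  intro l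
  induction l with
  | nil => simp
  | cons a l ih =>
    intro hc h
    cases l with
    | nil => simp
    | cons b t =>
      rw [List.Chain', List.isChain_cons_cons] at hc
      have := ih hc.2 (by simp)
      rw [List.getLast_cons (by simp : (b :: t) ≠ [])]
      simp only [List.head_cons] at this ⊢
      omega

lemma chain'_head_lt_getLast {β : Type*} (f : β → ℕ) (l : List β)
    (hc : l.Chain' (fun i j => f i < f j)) (h2 : 2 ≤ l.length) (h : l ≠ []) :
    f (l.head h) < f (l.getLast h) := by
  match l with
  | a :: b :: t =>
    rw [List.Chain', List.isChain_cons_cons] at hc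
    have := chain'_head_le_getLast f (b :: t) hc.2 (by simp)
    rw [List.getLast_cons (by simp : (b :: t) ≠ [])]
    simp only [List.head_cons] at this ⊢
    omega

lemma chain'_of_zip {β : Type*} (R : β → β → Prop) :
    ∀ (l : List β), (∀ p ∈ l.zip l.tail, R p.1 p.2) → l.Chain' R := by
  intro l
  induction l with
  | nil => exact fun _ => List.isChain_nil
  | cons a l ih =>
    intro h
    cases l with
    | nil => exact List.isChain_singleton _
    | cons b t =>
      rw [List.Chain', List.isChain_cons_cons]
      refine ⟨h (a, b) (by simp), ih ?_⟩
      intro p hp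
      exact h p (by simp [List.zip_cons_cons]; right; simpa using hp)

lemma zip_of_chain' {β : Type*} (R : β → β → Prop) :
    ∀ (l : List β), l.Chain' R → (∀ p ∈ l.zip l.tail, R p.1 p.2) := by
  intro l
  induction l with
  | nil => simp
  | cons a l ih =>
    intro h p hp
    cases l with
    | nil => simp at hp
    | cons b t =>
      rw [List.Chain', List.isChain_cons_cons] at h
      simp only [List.tail_cons, List.zip_cons_cons, List.mem_cons] at hp
      rcases hp with rfl | hp
      · exact h.1
      · exact ih h.2 p (by simpa using hp)

lemma isCycle_rotate_one {n : ℕ} {E : Fin n → Fin n → Prop} {C : List (Fin n)}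
    (h : IsCycle E C) : IsCycle E (C.rotate 1) := by
  obtain ⟨hne, hnd, hch, hcl⟩ := h
  cases C with
  | nil => exact absurd rfl hne
  | cons a l =>
    rw [List.rotate_cons_succ, List.rotate_zero]
    cases l with
    | nil => exact ⟨by simp, by simpa using hnd, List.isChain_singleton _, by simpa using hcl (by simp)⟩
    | cons b t =>
      have hne' : (b :: t : List (Fin n)) ≠ [] := by simp
      rw [List.Chain', List.isChain_cons_cons] at hch
      refine ⟨by simp, ?_, ?_, ?_⟩
      · rw [List.nodup_append]
        rw [List.nodup_cons] at hnd
        refine ⟨hnd.2, by simp, ?_⟩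
        intro y hy
        simp only [List.mem_singleton]
        rintro _ rfl rfl
        exact hnd.1 hy
      · rw [List.Chain', List.isChain_append]
        refine ⟨hch.2, by simp, ?_⟩
        intro y hy z hz
        simp only [List.head?_cons, Option.mem_def, Option.some.injEq] at hz
        subst hz
        rw [List.getLast?_eq_getLast hne'] at hy
        simp only [Option.mem_def, Option.some.injEq] at hy
        subst hy
        have := hcl (by simp)
        rwa [List.getLast_cons hne'] at this
      · intro h'
        rw [List.getLast_append_of_right_ne_nil _ _ (by simp), List.head_append_of_ne_nil hne']
        simpa using hch.1

lemma isCycle_rotate {n : ℕ} {E : Fin n → Fin n → Prop} {C : List (Fin n)}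
    (h : IsCycle E C) : ∀ r, IsCycle E (C.rotate r) := by
  intro r
  induction r with
  | zero => simpa using h
  | succ r ih =>
    have := isCycle_rotate_one ih
    rwa [List.rotate_rotate] at this

/-- Every cycle of the alignment graph has length at least `1/(2α)`. -/
lemma cycle_length_bound {n m : ℕ} (hm : 0 < m) {α : ℝ} (hα0 : 0 < α)
    {x : Fin m → List (Fin n)} {C : List (Fin n)}
    (h : IsCycle (edgeRel n m α x) C) : (1 : ℝ) ≤ 2 * α * C.length := by
  obtain ⟨hne, hnd, hch, hcl⟩ := h
  set D := C ++ [C.head hne] with hD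
  have hDne : D ≠ [] := by simp [hD]
  have hchD : D.Chain' (edgeRel n m α x) := by
    rw [hD, List.Chain', List.isChain_append]
    refine ⟨hch, by simp, ?_⟩
    intro y hy z hz
    rw [List.getLast?_eq_getLast hne] at hy
    simp only [Option.mem_def, Option.some.injEq, List.head?_cons] at hy hz
    subst hy; subst hz
    exact hcl hne
  have hE : ∀ p ∈ D.zip D.tail, edgeRel n m α x p.1 p.2 := zip_of_chain' _ _ hchD
  have hfail : ∀ k : Fin m, ∃ p ∈ D.zip D.tail,
      ¬ ((x k).idxOf p.1 < (x k).idxOf p.2) := by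
    intro k
    by_contra hcon
    push_neg at hcon
    have hchk : D.Chain' (fun i j => (x k).idxOf i < (x k).idxOf j) :=
      chain'_of_zip _ _ (by intro p hp; exact hcon p hp)
    have h2 : 2 ≤ D.length := by
      rw [hD, List.length_append]
      have : 1 ≤ C.length := List.length_pos_iff.2 hne
      simp; omega
    have hlt := chain'_head_lt_getLast (fun v => (x k).idxOf v) D hchk h2 hDne
    have hh : D.head hDne = C.head hne := List.head_append_of_ne_nil hne
    have hl : D.getLast hDne = C.head hne := List.getLast_append_singleton C
    rw [hh, hl] at hlt
    exact lt_irrefl _ hlt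
  set P := (D.zip D.tail).toFinset with hP
  have cover : (Finset.univ : Finset (Fin m)) ⊆
      P.biUnion (fun p => Finset.univ.filter
        (fun k => ¬ ((x k).idxOf p.1 < (x k).idxOf p.2))) := by
    intro k _
    obtain ⟨p, hp, hnp⟩ := hfail k
    exact Finset.mem_biUnion.2 ⟨p, List.mem_toFinset.2 hp,
      Finset.mem_filter.2 ⟨Finset.mem_univ k, hnp⟩⟩
  have h1 : (m : ℝ) ≤ ∑ p ∈ P, ((Finset.univ.filter
      (fun k => ¬ ((x k).idxOf p.1 < (x k).idxOf p.2))).card : ℝ) := by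
    have := le_trans (Finset.card_le_card cover) Finset.card_biUnion_le
    rw [Finset.card_univ, Fintype.card_fin] at this
    calc (m : ℝ) ≤ ((∑ p ∈ P, (Finset.univ.filter
        (fun k => ¬ ((x k).idxOf p.1 < (x k).idxOf p.2))).card : ℕ) : ℝ) := by
          exact_mod_cast this
      _ = _ := by push_cast; ring
  have h2 : ∀ p ∈ P, ((Finset.univ.filter
      (fun k => ¬ ((x k).idxOf p.1 < (x k).idxOf p.2))).card : ℝ) ≤ 2 * α * m := by
    intro p hp
    have hEp := hE p (List.mem_toFinset.1 hp)
    rw [edgeRel] at hEp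
    have hsum : (Finset.univ.filter (fun k => (x k).idxOf p.1 < (x k).idxOf p.2)).card
        + (Finset.univ.filter (fun k => ¬ ((x k).idxOf p.1 < (x k).idxOf p.2))).card
        = m := by
      rw [Finset.card_filter_add_card_filter_not]
      simp
    have : ((Finset.univ.filter (fun k => ¬ ((x k).idxOf p.1 < (x k).idxOf p.2))).card : ℝ)
        = m - ((Finset.univ.filter (fun k => (x k).idxOf p.1 < (x k).idxOf p.2)).card : ℝ) := by
      have := hsum
      push_cast [← this]
      ring
    rw [this]
    linarith
  have h3 : (m : ℝ) ≤ (P.card : ℝ) * (2 * α * m) := by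
    calc (m : ℝ) ≤ _ := h1
      _ ≤ ∑ _p ∈ P, 2 * α * m := Finset.sum_le_sum h2
      _ = (P.card : ℝ) * (2 * α * m) := by rw [Finset.sum_const, nsmul_eq_mul]
  have hPcard : (P.card : ℝ) ≤ (C.length : ℝ) := by
    have h4 : P.card ≤ (D.zip D.tail).length := List.toFinset_card_le _
    have h5 : (D.zip D.tail).length = C.length := by
      rw [List.length_zip, hD]
      simp [min_eq_right]
    exact_mod_cast h5 ▸ h4
  have hm' : (0 : ℝ) < m := by exact_mod_cast hm
  nlinarith [mul_le_mul_of_nonneg_right hPcard (by positivity : (0:ℝ) ≤ 2*α*m)]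

/-- Between two good vertices there is an edge in the direction of the median order. -/
lemma good_edge {n m : ℕ} {α : ℝ} {x : Fin m → List (Fin n)}
    (hx : ∀ k, x k ~ List.finRange n)
    {xmed : List (Fin n)} (hmed : xmed ~ List.finRange n)
    {U : Fin m → Finset (Fin n)}
    (halign : ∀ k, (xmed.filter (fun a => a ∉ U k)).Sublist (x k))
    {u v : Fin n} (huv : xmed.idxOf u < xmed.idxOf v)
    (hu : ((Finset.univ.filter (fun k => u ∈ U k)).card : ℝ) ≤ α * m)
    (hv : ((Finset.univ.filter (fun k => v ∈ U k)).card : ℝ) ≤ α * m) :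
    edgeRel n m α x u v := by
  have humem : u ∈ xmed := hmed.mem_iff.2 (List.mem_finRange u)
  have hvmem : v ∈ xmed := hmed.mem_iff.2 (List.mem_finRange v)
  have hpair : [u, v] <+ xmed := pair_sublist_of_indexOf_lt xmed u v humem hvmem huv
  have hkey : ∀ k : Fin m, u ∉ U k → v ∉ U k → (x k).idxOf u < (x k).idxOf v := by
    intro k hu' hv'
    have h1 : [u, v].filter (fun a => a ∉ U k) = [u, v] := by
      simp [List.filter, hu', hv']
    have h2 : [u, v] <+ xmed.filter (fun a => a ∉ U k) := by
      rw [← h1]; exact hpair.filter _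
    have h3 : [u, v] <+ x k := h2.trans (halign k)
    have hnd : (x k).Nodup := (hx k).nodup_iff.2 (List.nodup_finRange n)
    exact indexOf_lt_of_pair_sublist (x k) hnd u v h3
  rw [edgeRel]
  have hsub : Finset.univ.filter (fun k : Fin m => u ∉ U k ∧ v ∉ U k) ⊆
      Finset.univ.filter (fun k => (x k).idxOf u < (x k).idxOf v) := by
    apply Finset.monotone_filter_right
    intro k _ hk
    exact hkey k hk.1 hk.2
  have hcompl : Finset.univ.filter (fun k : Fin m => ¬ (u ∉ U k ∧ v ∉ U k)) ⊆
      Finset.univ.filter (fun k => u ∈ U k) ∪ Finset.univ.filter (fun k => v ∈ U k) := by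
    intro k hk
    simp only [Finset.mem_filter, Finset.mem_univ, true_and] at hk
    rw [Finset.mem_union]
    simp only [Finset.mem_filter, Finset.mem_univ, true_and]
    by_cases h : u ∈ U k
    · exact Or.inl h
    · right; by_contra h2; exact hk ⟨h, h2⟩
  have hsplit : (Finset.univ.filter (fun k : Fin m => u ∉ U k ∧ v ∉ U k)).card
      + (Finset.univ.filter (fun k : Fin m => ¬ (u ∉ U k ∧ v ∉ U k))).card = m := by
    rw [Finset.card_filter_add_card_filter_not]
    simp
  have hc1 : (Finset.univ.filter (fun k : Fin m => ¬ (u ∉ U k ∧ v ∉ U k))).card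
      ≤ (Finset.univ.filter (fun k : Fin m => u ∈ U k)).card
      + (Finset.univ.filter (fun k : Fin m => v ∈ U k)).card :=
    le_trans (Finset.card_le_card hcompl) (Finset.card_union_le _ _)
  have hc2 : ((Finset.univ.filter (fun k : Fin m => u ∉ U k ∧ v ∉ U k)).card : ℝ)
      ≤ ((Finset.univ.filter (fun k => (x k).idxOf u < (x k).idxOf v)).card : ℝ) := by
    exact_mod_cast Finset.card_le_card hsub
  have hmeq : ((Finset.univ.filter (fun k : Fin m => u ∉ U k ∧ v ∉ U k)).card : ℝ)
      + ((Finset.univ.filter (fun k : Fin m => ¬ (u ∉ U k ∧ v ∉ U k))).card : ℝ) = m := by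
    exact_mod_cast hsplit
  have hc1' : ((Finset.univ.filter (fun k : Fin m => ¬ (u ∉ U k ∧ v ∉ U k))).card : ℝ)
      ≤ ((Finset.univ.filter (fun k : Fin m => u ∈ U k)).card : ℝ)
      + ((Finset.univ.filter (fun k : Fin m => v ∈ U k)).card : ℝ) := by
    exact_mod_cast hc1
  linarith

/-- On a minimum-length cycle, the target of an extra edge must be the cyclic successor
of its source. -/
lemma cycle_succ {n : ℕ} {E : Fin n → Fin n → Prop} {C : List (Fin n)}
    (hC : IsCycle E C)
    (hshort : ∀ C' : List (Fin n), IsCycle E C' → (∀ a ∈ C', a ∈ C) →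
      C.length ≤ C'.length)
    {p q : Fin n} (hp : p ∈ C) (hq : q ∈ C) (hE : E p q) :
    ∀ hne' : C.rotate (C.idxOf p + 1) ≠ [],
      q = (C.rotate (C.idxOf p + 1)).head hne' := by
  intro hne'
  set i := C.idxOf p with hi
  set C' := C.rotate (i + 1) with hC'def
  have hL : C'.length = C.length := List.length_rotate C (i + 1)
  have hipos : i < C.length := List.idxOf_lt_length_iff.2 hp
  have hC' : IsCycle E C' := isCycle_rotate hC (i + 1)
  have hqC' : q ∈ C' := List.mem_rotate.2 hq
  set j := C'.idxOf q with hj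
  have hjlt : j < C'.length := List.idxOf_lt_length_iff.2 hqC'
  have hlen'' : (C'.drop j).length = C'.length - j := List.length_drop
  have hne'' : C'.drop j ≠ [] := by
    rw [← List.length_pos_iff, hlen'']; omega
  have hhead : (C'.drop j).head hne'' = q := by
    rw [List.head_eq_getElem_zero hne'', List.getElem_drop]
    simp only [Nat.add_zero]
    exact List.getElem_idxOf hjlt
  have hgetLast : (C'.drop j).getLast hne'' = p := by
    rw [List.getLast_eq_getElem, List.getElem_drop]
    have hidx : j + ((C'.drop j).length - 1) = C'.length - 1 := by
      rw [List.length_drop]; omega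
    simp only [hidx]
    have hstep : (C.rotate (i+1))[C'.length - 1]'(by rw [List.length_rotate]; omega) = p := by
      rw [List.getElem_rotate]
      have hidx2 : (C'.length - 1 + (i + 1)) % C.length = i := by
        rw [hL]
        have h7 : C.length - 1 + (i + 1) = C.length + i := by omega
        rw [h7, Nat.add_mod_left]
        exact Nat.mod_eq_of_lt hipos
      simp only [hidx2]
      exact List.getElem_idxOf hipos
    exact hstep
  have hcyc'' : IsCycle E (C'.drop j) := by
    refine ⟨hne'', (List.drop_sublist j C').nodup hC'.2.1,
      hC'.2.2.1.suffix (List.drop_suffix j C'), ?_⟩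
    intro h
    rw [hhead, hgetLast]
    exact hE
  have hmem'' : ∀ a ∈ C'.drop j, a ∈ C := by
    intro a ha
    exact List.mem_rotate.1 (List.drop_subset j C' ha)
  have hlen := hshort (C'.drop j) hcyc'' hmem''
  have hj0 : j = 0 := by omega
  have h0 : C'.idxOf q = 0 := by omega
  rw [List.head_eq_getElem_zero hne']
  simp only [← h0]
  exact (List.getElem_idxOf hjlt).symm

/-- In the iterative shortest-cycle-deletion process on the alignment graph (parameter
`0 < α ≤ 1/10`), every deleted minimum-length cycle contains at most two good vertices
(a symbol is good if it is unaligned with the median in at most `αm` of the fixed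
optimal alignments); consequently the total number of good vertices deleted over all
iterations is at most `(4α/(1−4α))·|Ḡ|`, where `Ḡ` is the set of bad symbols. -/
theorem shortest_cycle_deletion_good_bound (n m : ℕ) (hm : 0 < m)
    (α : ℝ) (hα0 : 0 < α) (hα : α ≤ 1 / 10)
    (x : Fin m → List (Fin n)) (hx : ∀ k, x k ~ List.finRange n)
    (xmed : List (Fin n)) (hmed : xmed ~ List.finRange n)
    (U : Fin m → Finset (Fin n))
    (halign : ∀ k, (xmed.filter (fun a => a ∉ U k)).Sublist (x k))
    (T : ℕ) (V : ℕ → Finset (Fin n)) (hV0 : V 0 = Finset.univ)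
    (cyc : ℕ → List (Fin n))
    (hcyc : ∀ t < T, IsCycle (edgeRel n m α x) (cyc t))
    (hmem : ∀ t < T, ∀ a ∈ cyc t, a ∈ V t)
    (hmin : ∀ t < T, ∀ C : List (Fin n), IsCycle (edgeRel n m α x) C →
      (∀ a ∈ C, a ∈ V t) → (cyc t).length ≤ C.length)
    (hVsucc : ∀ t, V (t + 1) = V t \ (cyc t).toFinset) :
    (∀ t < T, ((cyc t).toFinset.filter
        (fun a => ((Finset.univ.filter (fun k => a ∈ U k)).card : ℝ) ≤ α * m)).card ≤ 2) ∧
    (∑ t ∈ Finset.range T, (((cyc t).toFinset.filter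
        (fun a => ((Finset.univ.filter (fun k => a ∈ U k)).card : ℝ) ≤ α * m)).card : ℝ)) ≤
      4 * α / (1 - 4 * α) *
        ((Finset.univ.filter
          (fun a : Fin n => α * m <
            ((Finset.univ.filter (fun k => a ∈ U k)).card : ℝ))).card : ℝ) := by
  -- Part 1 : at most two good vertices per deleted cycle
  have part1 : ∀ t < T, ((cyc t).toFinset.filter
      (fun a => ((Finset.univ.filter (fun k => a ∈ U k)).card : ℝ) ≤ α * m)).card ≤ 2 := by
    intro t ht
    by_contra hcon
    push_neg at hcon
    obtain ⟨a, b, c, ha, hb, hc, hab, hac, hbc⟩ := Finset.two_lt_card_iff.1 hcon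
    rw [Finset.mem_filter, List.mem_toFinset] at ha hb hc
    have hCcyc := hcyc t ht
    have hshort : ∀ C' : List (Fin n), IsCycle (edgeRel n m α x) C' →
        (∀ a ∈ C', a ∈ cyc t) → (cyc t).length ≤ C'.length := by
      intro C' hC' hmem'
      exact hmin t ht C' hC' (fun a ha => hmem t ht a (hmem' a ha))
    have hrotne : ∀ r : ℕ, (cyc t).rotate r ≠ [] := by
      intro r
      rw [← List.length_pos_iff, List.length_rotate]
      exact List.length_pos_iff.2 hCcyc.1
    -- key: three good vertices with one medially before the two others give contradiction
    have key : ∀ u v w : Fin n, u ∈ cyc t → v ∈ cyc t → w ∈ cyc t →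
        ((Finset.univ.filter (fun k => u ∈ U k)).card : ℝ) ≤ α * m →
        ((Finset.univ.filter (fun k => v ∈ U k)).card : ℝ) ≤ α * m →
        ((Finset.univ.filter (fun k => w ∈ U k)).card : ℝ) ≤ α * m →
        v ≠ w → xmed.idxOf u < xmed.idxOf v → xmed.idxOf u < xmed.idxOf w →
        False := by
      intro u v w hu hv hw hgu hgv hgw hvw huv huw
      have e1 : edgeRel n m α x u v := good_edge hx hmed halign huv hgu hgv
      have e2 : edgeRel n m α x u w := good_edge hx hmed halign huw hgu hgw
      have h1 := cycle_succ hCcyc hshort hu hv e1 (hrotne _)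
      have h2 := cycle_succ hCcyc hshort hu hw e2 (hrotne _)
      exact hvw (h1.trans h2.symm)
    -- indices in the median are pairwise distinct
    have hidx_inj : ∀ u v : Fin n, u ≠ v → xmed.idxOf u ≠ xmed.idxOf v := by
      intro u v huv heq
      apply huv
      have hu : u ∈ xmed := hmed.mem_iff.2 (List.mem_finRange u)
      have hv : v ∈ xmed := hmed.mem_iff.2 (List.mem_finRange v)
      have h1 := List.getElem_idxOf (List.idxOf_lt_length_iff.2 hu)
      have h2 := List.getElem_idxOf (List.idxOf_lt_length_iff.2 hv)
      rw [← h1, ← h2]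
      simp only [heq]
    have hab' := hidx_inj a b hab
    have hac' := hidx_inj a c hac
    have hbc' := hidx_inj b c hbc
    rcases lt_trichotomy (xmed.idxOf a) (xmed.idxOf b) with h1 | h1 | h1
    · rcases lt_trichotomy (xmed.idxOf a) (xmed.idxOf c) with h2 | h2 | h2
      · exact key a b c ha.1 hb.1 hc.1 ha.2 hb.2 hc.2 hbc h1 h2
      · exact hac' h2
      · exact key c a b hc.1 ha.1 hb.1 hc.2 ha.2 hb.2 hab h2 (h2.trans h1)
    · exact hab' h1
    · rcases lt_trichotomy (xmed.idxOf b) (xmed.idxOf c) with h2 | h2 | h2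
      · exact key b a c hb.1 ha.1 hc.1 hb.2 ha.2 hc.2 hac h1 h2
      · exact hbc' h2
      · exact key c a b hc.1 ha.1 hb.1 hc.2 ha.2 hb.2 hab (h2.trans h1) h2
  refine ⟨part1, ?_⟩
  -- Part 2 : summation bound
  have h4α : (0 : ℝ) < 1 - 4 * α := by linarith
  -- the deleted cycles are pairwise vertex-disjoint
  have hVmono : ∀ t s : ℕ, V (t + s) ⊆ V t := by
    intro t s
    induction s with
    | zero => exact Finset.Subset.refl _
    | succ s ih =>
      rw [show t + (s+1) = (t+s) + 1 by ring, hVsucc]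
      exact le_trans (Finset.sdiff_subset) ih
  have hdisj : ∀ t1 t2 : ℕ, t1 < t2 → t2 < T →
      Disjoint (cyc t1).toFinset (cyc t2).toFinset := by
    intro t1 t2 h12 h2T
    rw [Finset.disjoint_right]
    intro a ha2 ha1
    have haV2 : a ∈ V t2 := hmem t2 h2T a (List.mem_toFinset.1 ha2)
    have : V t2 ⊆ V (t1 + 1) := by
      have := hVmono (t1 + 1) (t2 - t1 - 1)
      rwa [show t1 + 1 + (t2 - t1 - 1) = t2 by omega] at this
    have haV : a ∈ V (t1 + 1) := this haV2
    rw [hVsucc, Finset.mem_sdiff] at haV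
    exact haV.2 ha1
  -- notation
  set good : Fin n → Prop :=
    fun a => ((Finset.univ.filter (fun k => a ∈ U k)).card : ℝ) ≤ α * m with hgood
  set Gbar := Finset.univ.filter
    (fun a : Fin n => α * m < ((Finset.univ.filter (fun k => a ∈ U k)).card : ℝ)) with hGbar
  set B : ℕ → Finset (Fin n) := fun t => (cyc t).toFinset.filter
    (fun a => α * m < ((Finset.univ.filter (fun k => a ∈ U k)).card : ℝ)) with hB
  set Gd : ℕ → Finset (Fin n) := fun t => (cyc t).toFinset.filter
    (fun a => ((Finset.univ.filter (fun k => a ∈ U k)).card : ℝ) ≤ α * m) with hGd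
  -- sum of bad cards is at most |Ḡ|
  have hbadsum : ∑ t ∈ Finset.range T, (B t).card ≤ Gbar.card := by
    rw [← Finset.card_biUnion]
    · apply Finset.card_le_card
      intro a ha
      rw [Finset.mem_biUnion] at ha
      obtain ⟨t, ht, hat⟩ := ha
      rw [hB] at hat
      simp only [Finset.mem_filter] at hat
      rw [hGbar]
      exact Finset.mem_filter.2 ⟨Finset.mem_univ a, hat.2⟩
    · intro t1 ht1 t2 ht2 h12
      rw [Finset.mem_coe, Finset.mem_range] at ht1 ht2
      have : Disjoint (cyc t1).toFinset (cyc t2).toFinset := by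
        rcases lt_or_gt_of_ne h12 with h | h
        · exact hdisj t1 t2 h ht2
        · exact (hdisj t2 t1 h ht1).symm
      exact Finset.disjoint_of_subset_left (Finset.filter_subset _ _)
        (Finset.disjoint_of_subset_right (Finset.filter_subset _ _) this)
  -- per-cycle accounting
  have hpertstep : ∀ t < T, ((Gd t).card : ℝ) ≤ 4 * α / (1 - 4 * α) * ((B t).card : ℝ) := by
    intro t ht
    have hlen : (1 : ℝ) ≤ 2 * α * (cyc t).length := cycle_length_bound hm hα0 (hcyc t ht)
    have hGd2 : ((Gd t).card : ℝ) ≤ 2 := by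
      have := part1 t ht
      rw [hGd]
      exact_mod_cast this
    have hsplit : (Gd t).card + (B t).card = (cyc t).length := by
      have hnd : (cyc t).Nodup := (hcyc t ht).2.1
      have hcard : (cyc t).toFinset.card = (cyc t).length := List.toFinset_card_of_nodup hnd
      have hfc : B t = (cyc t).toFinset.filter
          (fun a => ¬ ((Finset.univ.filter (fun k => a ∈ U k)).card : ℝ) ≤ α * m) := by
        rw [hB]
        exact Finset.filter_congr (fun a _ => by rw [not_le])
      rw [hfc, ← hcard, hGd]
      exact Finset.card_filter_add_card_filter_not
        (p := fun a => ((Finset.univ.filter (fun k => a ∈ U k)).card : ℝ) ≤ α * m)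
    have hsplit' : ((Gd t).card : ℝ) + ((B t).card : ℝ) = ((cyc t).length : ℝ) := by
      exact_mod_cast hsplit
    rw [div_mul_eq_mul_div, le_div_iff₀ h4α]
    nlinarith [hlen, hsplit', hGd2,
      mul_le_mul_of_nonneg_left hGd2 hα0.le]
  -- put it together
  have hsum1 : (∑ t ∈ Finset.range T, ((Gd t).card : ℝ)) ≤
      ∑ t ∈ Finset.range T, 4 * α / (1 - 4 * α) * ((B t).card : ℝ) := by
    apply Finset.sum_le_sum
    intro t ht
    exact hpertstep t (Finset.mem_range.1 ht)
  have hsum2 : (∑ t ∈ Finset.range T, 4 * α / (1 - 4 * α) * ((B t).card : ℝ)) =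
      4 * α / (1 - 4 * α) * ∑ t ∈ Finset.range T, ((B t).card : ℝ) := by
    rw [Finset.mul_sum]
  have hcoef : (0 : ℝ) ≤ 4 * α / (1 - 4 * α) := by positivity
  have hsum3 : (∑ t ∈ Finset.range T, ((B t).card : ℝ)) ≤ (Gbar.card : ℝ) := by
    calc (∑ t ∈ Finset.range T, ((B t).card : ℝ))
        = ((∑ t ∈ Finset.range T, (B t).card : ℕ) : ℝ) := by push_cast; ring
      _ ≤ (Gbar.card : ℝ) := by exact_mod_cast hbadsum
  calc (∑ t ∈ Finset.range T, ((Gd t).card : ℝ)) ≤ _ := hsum1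
    _ = 4 * α / (1 - 4 * α) * ∑ t ∈ Finset.range T, ((B t).card : ℝ) := hsum2
    _ ≤ 4 * α / (1 - 4 * α) * (Gbar.card : ℝ) :=
        mul_le_mul_of_nonneg_left hsum3 hcoef
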